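/- For every real a > 0, log Γ(a) = a(log a − 1) + (1/2)·log(2π/a) + Σ_{n=0}^∞ [ (a + n + 1/2)·log(1 + 1/(a+n)) − 1 ], where the series on the right converges. -/

import Mathlib

open Real Filter Finset Topology

-- bound on the term, in terms of y = 1/x
lemma term_bound_aux {y : ℝ} (hy0 : 0 < y) (hy : y ≤ 1/2) :
    |(1/y + 1/2) * Real.log (1 + y) - 1| ≤ 3 * y^2 := by
  have h1 : |(-y)| < 1 := by rw [abs_neg, abs_of_pos hy0]; linarith
  have H := Real.abs_log_sub_add_sum_range_le h1 2
  have hsum : (∑ i ∈ Finset.range 2, (-y) ^ (i+1) / (i+1)) = -y + y^2/2 := by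
    simp [Finset.sum_range_succ]
    ring
  rw [hsum] at H
  have hiy : |(-y)| ^ (2+1) / (1 - |(-y)|) ≤ 2 * y^3 := by
    rw [abs_neg, abs_of_pos hy0, div_le_iff₀ (by linarith)]
    have hp : 0 ≤ y^3 * (1 - 2*y) := mul_nonneg (pow_nonneg hy0.le 3) (by linarith)
    calc y^(2+1) = y^3 := by ring
      _ ≤ 2*y^3*(1-y) := by nlinarith [hp]
  have he : |Real.log (1+y) - (y - y^2/2)| ≤ 2*y^3 := by
    have : -y + y^2/2 + Real.log (1 - -y) = Real.log (1+y) - (y - y^2/2) := by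
      ring_nf
    rw [this] at H
    exact H.trans hiy
  set L := Real.log (1+y) with hL
  have hub := abs_le.mp he
  have key : |(1 + y/2) * L - y| ≤ 3 * y^3 := by
    rw [abs_le]
    constructor <;> nlinarith [hub.1, hub.2]
  have : (1/y + 1/2) * L - 1 = ((1 + y/2) * L - y) / y := by
    field_simp
  rw [this, abs_div, abs_of_pos hy0, div_le_iff₀ hy0]
  calc |(1 + y/2) * L - y| ≤ 3 * y^3 := key
    _ = 3 * y^2 * y := by ring

theorem logGamma_series (a : ℝ) (ha : 0 < a) :
    Summable (fun n : ℕ => (a + n + 1/2) * Real.log (1 + 1/(a + n)) - 1) ∧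
    Real.log (Real.Gamma a)
      = a * (Real.log a - 1) + (1/2) * Real.log (2 * Real.pi / a)
        + ∑' n : ℕ, ((a + n + 1/2) * Real.log (1 + 1/(a + n)) - 1) := by
  set t : ℕ → ℝ := fun n => (a + n + 1/2) * Real.log (1 + 1/(a + n)) - 1 with ht
  -- pointwise bound for n ≥ 2
  have hbound : ∀ n : ℕ, 2 ≤ n → |t n| ≤ 3 / (n:ℝ)^2 := by
    intro n hn
    have hn2 : (2:ℝ) ≤ (n:ℝ) := by exact_mod_cast hn
    have hx : (0:ℝ) < a + n := by linarith
    have hx2 : (2:ℝ) ≤ a + n := by linarith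
    set y := 1/(a+n) with hy
    have hy0 : 0 < y := by positivity
    have hyle : y ≤ 1/2 := by
      rw [hy, div_le_div_iff₀ hx (by norm_num)]; linarith
    have h1y : 1/y = a + n := by rw [hy]; field_simp
    have := term_bound_aux hy0 hyle
    rw [h1y] at this
    have hteq : t n = (a + n + 1/2) * Real.log (1 + y) - 1 := by rw [ht]
    rw [hteq]
    refine this.trans ?_
    have : y^2 ≤ 1/(n:ℝ)^2 := by
      rw [hy, div_pow, one_pow]
      apply div_le_div_of_nonneg_left (by norm_num) (by positivity)
      nlinarith
    calc 3 * y^2 ≤ 3 * (1/(n:ℝ)^2) := by linarith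
      _ = 3 / (n:ℝ)^2 := by ring
  -- summability
  have hsummable : Summable t := by
    rw [← summable_nat_add_iff 2]
    have hg : Summable (fun n : ℕ => 3 / ((n:ℝ)+2)^2) := by
      have h0 : Summable (fun n : ℕ => 1 / (n:ℝ)^2) :=
        Real.summable_one_div_nat_pow.mpr one_lt_two
      have h1 : Summable (fun n : ℕ => 1 / (((n+2:ℕ)):ℝ)^2) :=
        (summable_nat_add_iff (f := fun n : ℕ => 1 / (n:ℝ)^2) 2).mpr h0
      have h2 : Summable (fun n : ℕ => 3 * (1 / ((n:ℝ)+2)^2)) := by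
        apply Summable.mul_left
        exact_mod_cast h1
      convert h2 using 2 with n; ring
    refine Summable.of_norm_bounded hg ?_
    intro n
    have := hbound (n+2) (by omega)
    rw [Real.norm_eq_abs]
    convert this using 3 <;> push_cast <;> ring
  refine ⟨hsummable, ?_⟩
  -- telescoping identity
  set hfun : ℝ → ℝ := fun x => (x - 1/2) * Real.log x - x with hhfun
  have hterm : ∀ n : ℕ, t n = (hfun (a + (n+1:ℕ)) - hfun (a + n)) - Real.log (a + n) := by
    intro n
    have hx : (0:ℝ) < a + n := by positivity
    have hlog : Real.log (1 + 1/(a+n)) = Real.log (a+n+1) - Real.log (a+n) := by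
      rw [← Real.log_div (by positivity) hx.ne']
      congr 1; field_simp
    rw [ht]; simp only
    rw [hlog, hhfun]
    push_cast
    ring
  have hpartial : ∀ N : ℕ, ∑ n ∈ Finset.range N, t n
      = hfun (a + N) - hfun (a + (0:ℕ)) - ∑ n ∈ Finset.range N, Real.log (a + n) := by
    intro N
    have : ∀ n ∈ Finset.range N, t n
        = ((fun k : ℕ => hfun (a + k)) (n+1) - (fun k : ℕ => hfun (a + k)) n)
          - Real.log (a + n) := fun n _ => hterm n
    rw [Finset.sum_congr rfl this, Finset.sum_sub_distrib,
      Finset.sum_range_sub (fun k : ℕ => hfun (a + k))]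
  -- the comparison function
  set F : ℕ → ℝ := fun N => (a + N + 1/2) * Real.log (1 + a/N) - a
      - Real.log (Stirling.stirlingSeq N) - (1/2) * Real.log 2
      + Real.BohrMollerup.logGammaSeq a N - hfun a with hF
  have heq : ∀ N : ℕ, 1 ≤ N → ∑ n ∈ Finset.range N, t n = F N := by
    intro N hN
    have hN0 : (0:ℝ) < N := by exact_mod_cast hN
    have hfac : (0:ℝ) < ((N.factorial : ℝ)) := by exact_mod_cast N.factorial_pos
    -- log N!
    have hstir : Real.log (((N.factorial : ℝ)))
        = Real.log (Stirling.stirlingSeq N) + (1/2) * (Real.log 2 + Real.log N)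
          + N * (Real.log N - 1) := by
      have hs : Stirling.stirlingSeq N = ((N.factorial : ℝ)) / (Real.sqrt (2*N) * ((N:ℝ)/Real.exp 1)^N) :=
        rfl
      have h2N : (0:ℝ) < 2 * N := by linarith
      have hNe : (0:ℝ) < (N:ℝ)/Real.exp 1 := by positivity
      rw [hs, Real.log_div hfac.ne' (by positivity), Real.log_mul (by positivity) (by positivity),
        Real.log_sqrt h2N.le, Real.log_pow, Real.log_mul (by norm_num) hN0.ne',
        Real.log_div hN0.ne' (Real.exp_pos 1).ne', Real.log_exp]
      ring
    -- sum of logs via logGammaSeq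
    have hlgs : Real.BohrMollerup.logGammaSeq a N
        = a * Real.log N + Real.log (N.factorial : ℝ) - ∑ m ∈ Finset.range (N+1), Real.log (a + m) := rfl
    have hsumlog : ∑ n ∈ Finset.range N, Real.log (a + n)
        = a * Real.log N + Real.log (N.factorial : ℝ) - Real.BohrMollerup.logGammaSeq a N
          - Real.log (a + N) := by
      rw [hlgs]
      rw [Finset.sum_range_succ]
      ring
    have hlog1 : Real.log (1 + a/N) = Real.log (a + N) - Real.log N := by
      rw [← Real.log_div (by positivity) hN0.ne']
      congr 1; field_simp; ring
    rw [hpartial N, hsumlog, hstir, hF]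
    simp only
    rw [hlog1, hhfun]
    push_cast
    ring
  -- limits
  have hT1 : Tendsto (fun N : ℕ => (a + N + 1/2) * Real.log (1 + a/N)) atTop (𝓝 a) := by
    have h1 : Tendsto (fun N : ℕ => (N:ℝ) * Real.log (1 + a/N)) atTop (𝓝 a) :=
      (Real.tendsto_mul_log_one_add_div_atTop a).comp tendsto_natCast_atTop_atTop
    have h2 : Tendsto (fun N : ℕ => Real.log (1 + a/N)) atTop (𝓝 0) := by
      have : Tendsto (fun N : ℕ => 1 + a/N) atTop (𝓝 1) := by
        have := tendsto_const_div_atTop_nhds_zero_nat a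
        have h' := this.const_add (1:ℝ)
        simpa using h'
      have hcont : ContinuousAt Real.log 1 := Real.continuousAt_log one_ne_zero
      have := hcont.tendsto.comp this
      simpa [Function.comp_def] using this
    have h3 : Tendsto (fun N : ℕ => (a + 1/2) * Real.log (1 + a/N)) atTop (𝓝 0) := by
      simpa using h2.const_mul (a + 1/2)
    have := h1.add h3
    rw [add_zero] at this
    refine this.congr (fun N => ?_)
    ring
  have hT2 : Tendsto (fun N : ℕ => Real.log (Stirling.stirlingSeq N)) atTop
      (𝓝 (Real.log π / 2)) := by
    have hcont : ContinuousAt Real.log (Real.sqrt π) :=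
      Real.continuousAt_log (by positivity)
    have := hcont.tendsto.comp Stirling.tendsto_stirlingSeq_sqrt_pi
    rw [Real.log_sqrt Real.pi_pos.le] at this
    exact this
  have hT3 : Tendsto (fun N : ℕ => Real.BohrMollerup.logGammaSeq a N) atTop
      (𝓝 (Real.log (Real.Gamma a))) := Real.BohrMollerup.tendsto_log_gamma ha
  have hTF : Tendsto F atTop
      (𝓝 (a - a - Real.log π / 2 - (1/2)*Real.log 2 + Real.log (Real.Gamma a) - hfun a)) := by
    exact ((((hT1.sub tendsto_const_nhds).sub hT2).sub tendsto_const_nhds).add hT3).sub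
      tendsto_const_nhds
  -- partial sums tend to limit
  have hTsum : Tendsto (fun N => ∑ n ∈ Finset.range N, t n) atTop
      (𝓝 (a - a - Real.log π / 2 - (1/2)*Real.log 2 + Real.log (Real.Gamma a) - hfun a)) := by
    refine hTF.congr' ?_
    filter_upwards [eventually_ge_atTop 1] with N hN
    exact (heq N hN).symm
  have hTsum' : Tendsto (fun N => ∑ n ∈ Finset.range N, t n) atTop (𝓝 (∑' n, t n)) :=
    hsummable.hasSum.tendsto_sum_nat
  have htsum : ∑' n, t n
      = a - a - Real.log π / 2 - (1/2)*Real.log 2 + Real.log (Real.Gamma a) - hfun a :=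
    tendsto_nhds_unique hTsum' hTsum
  rw [htsum, hhfun]
  have hlog2pia : Real.log (2 * π / a) = Real.log 2 + Real.log π - Real.log a := by
    rw [Real.log_div (by positivity) ha.ne', Real.log_mul (by norm_num) Real.pi_pos.ne']
  rw [hlog2pia]
  simp only
  ring
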